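/- Let G be a group, A a left ℤ[G]-module, α ∈ A, and σ ∈ G with σ ≠ 1. If there exists a ℤ[G]-module homomorphism φ: A → B, where B is an abelian group with trivial G-action, such that φ(α) ≠ 0, then the element α[σ] is nonzero in Wh₁⁺(G;A) (and its image φ(α)[σ] is nonzero in Wh₁⁺(G;B)). -/

import Mathlib

open scoped TensorProduct

noncomputable section

variable (G : Type) [Group G]

/-- The integral group ring `ℤ[G]`. -/
abbrev GrpRing := MonoidAlgebra ℤ G

/-- A group element `g ∈ G` regarded as an element of `ℤ[G]`. -/
def ofg (g : G) : GrpRing G := MonoidAlgebra.single g 1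

/-- The conjugation action of `g ∈ G` on `ℤ[G]`, `h ↦ g h g⁻¹` extended `ℤ`-linearly. -/
def conjZ (g : G) : GrpRing G ≃ₗ[ℤ] GrpRing G :=
  (MonoidAlgebra.domCongr ℤ ℤ (MulAut.conj g)).toLinearEquiv

/-- The subgroup of `N` generated by all `g·n − n`; the coinvariants
`N_G = H₀(G;N)` is the quotient of `N` by this subgroup. -/
def coinvSub {N : Type} [AddCommGroup N] (act : G → N ≃+ N) : AddSubgroup N :=
  AddSubgroup.closure {x | ∃ (g : G) (n : N), x = act g n - n}

/-- The coinvariants `N_G = H₀(G;N)` of a `G`-module `N`. -/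
abbrev Coinv {N : Type} [AddCommGroup N] (act : G → N ≃+ N) : Type := N ⧸ coinvSub G act

variable (A : Type) [AddCommGroup A] [Module (GrpRing G) A]

/-- The action of `g ∈ G` on the left `ℤ[G]`-module `A`. -/
def actA (g : G) : A ≃ₗ[ℤ] A :=
  (AddEquiv.mk' ⟨fun a => ofg G g • a, fun a => ofg G g⁻¹ • a,
    fun a => by simp [smul_smul, ofg, MonoidAlgebra.single_mul_single, ← MonoidAlgebra.one_def],
    fun a => by simp [smul_smul, ofg, MonoidAlgebra.single_mul_single, ← MonoidAlgebra.one_def]⟩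
    (fun a b => smul_add _ a b)).toIntLinearEquiv

/-- `A[G] = A ⊗_ℤ ℤ[G]`. -/
abbrev AG := A ⊗[ℤ] GrpRing G

/-- The diagonal action `g·(a ⊗ h) = (g·a) ⊗ (g h g⁻¹)` of `g ∈ G` on `A[G]`. -/
def diag (g : G) : AG G A ≃+ AG G A :=
  (TensorProduct.congr (actA G A g) (conjZ G g)).toAddEquiv

/-- The map `a ↦ a ⊗ 1`. -/
def tensOne : A →ₗ[ℤ] AG G A := (TensorProduct.mk ℤ A (GrpRing G)).flip 1

/-- `A[1] = A ⊗ ℤ·1`, as an additive subgroup of `A[G]`. -/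
def A1 : AddSubgroup (AG G A) := (tensOne G A).toAddMonoidHom.range

lemma conjZ_one (g : G) : conjZ G g 1 = 1 := by simp [conjZ]

lemma A1_invariant (g : G) :
    (A1 G A).map (diag G A g).toAddMonoidHom = A1 G A := by
  apply le_antisymm
  · rintro _ ⟨_, ⟨a, rfl⟩, rfl⟩
    refine ⟨actA G A g a, ?_⟩
    show _ = (TensorProduct.congr (actA G A g) (conjZ G g)) (a ⊗ₜ[ℤ] 1)
    simp [tensOne, TensorProduct.congr_tmul, conjZ_one]
    rfl
  · rintro _ ⟨a, rfl⟩
    refine ⟨tensOne G A ((actA G A g).symm a), ⟨_, rfl⟩, ?_⟩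
    show (TensorProduct.congr (actA G A g) (conjZ G g)) _ = _
    change TensorProduct.congr _ _ (_ ⊗ₜ[ℤ] 1) = _ ⊗ₜ[ℤ] 1
    simp [tensOne, TensorProduct.congr_tmul, conjZ_one]

/-- The quotient `G`-module `A[G]/A[1]`. -/
abbrev AGmod1 := AG G A ⧸ A1 G A

/-- The diagonal action of `g ∈ G` descended to `A[G]/A[1]`. -/
def diagQ (g : G) : AGmod1 G A ≃+ AGmod1 G A :=
  QuotientAddGroup.congr (A1 G A) (A1 G A) (diag G A g) (A1_invariant G A g)

/-- `Wh₁⁺(G;A) := (A[G]/A[1])_G`. -/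
abbrev Wh : Type := Coinv G (diagQ G A)

/-- `a[σ] ∈ Wh₁⁺(G;A)`, the class of `a ⊗ σ`. -/
def whElem (a : A) (σ : G) : Wh G A :=
  QuotientAddGroup.mk (QuotientAddGroup.mk (a ⊗ₜ[ℤ] ofg G σ))

section TrivialAction

variable (B : Type) [AddCommGroup B]

/-- `B[G] = B ⊗_ℤ ℤ[G]` for an abelian group `B` with trivial `G`-action. -/
abbrev AGT := B ⊗[ℤ] GrpRing G

/-- The diagonal action `g·(b ⊗ h) = b ⊗ (g h g⁻¹)` on `B[G]` (trivial action on `B`). -/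
def diagT (g : G) : AGT G B ≃+ AGT G B :=
  (TensorProduct.congr (LinearEquiv.refl ℤ B) (conjZ G g)).toAddEquiv

/-- The map `b ↦ b ⊗ 1`. -/
def tensOneT : B →ₗ[ℤ] AGT G B := (TensorProduct.mk ℤ B (GrpRing G)).flip 1

/-- `B[1] = B ⊗ ℤ·1`, as an additive subgroup of `B[G]`. -/
def B1 : AddSubgroup (AGT G B) := (tensOneT G B).toAddMonoidHom.range

lemma B1_invariant (g : G) :
    (B1 G B).map (diagT G B g).toAddMonoidHom = B1 G B := by
  apply le_antisymm
  · rintro _ ⟨_, ⟨b, rfl⟩, rfl⟩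
    refine ⟨b, ?_⟩
    show _ = (TensorProduct.congr (LinearEquiv.refl ℤ B) (conjZ G g)) (b ⊗ₜ[ℤ] 1)
    simp [tensOneT, TensorProduct.congr_tmul, conjZ_one]
    rfl
  · rintro _ ⟨b, rfl⟩
    refine ⟨tensOneT G B b, ⟨_, rfl⟩, ?_⟩
    show (TensorProduct.congr (LinearEquiv.refl ℤ B) (conjZ G g)) _ = _
    change TensorProduct.congr _ _ (_ ⊗ₜ[ℤ] 1) = _ ⊗ₜ[ℤ] 1
    simp [tensOneT, TensorProduct.congr_tmul, conjZ_one]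

/-- The quotient `G`-module `B[G]/B[1]`. -/
abbrev BGmod1 := AGT G B ⧸ B1 G B

/-- The diagonal action of `g ∈ G` descended to `B[G]/B[1]`. -/
def diagQT (g : G) : BGmod1 G B ≃+ BGmod1 G B :=
  QuotientAddGroup.congr (B1 G B) (B1 G B) (diagT G B g) (B1_invariant G B g)

/-- `Wh₁⁺(G;B) := (B[G]/B[1])_G` for `B` with trivial `G`-action. -/
abbrev WhT : Type := Coinv G (diagQT G B)

/-- `b[σ] ∈ Wh₁⁺(G;B)`, the class of `b ⊗ σ`. -/
def whElemT (b : B) (σ : G) : WhT G B :=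
  QuotientAddGroup.mk (QuotientAddGroup.mk (b ⊗ₜ[ℤ] ofg G σ))

end TrivialAction


section AuxProof

open scoped Classical in
/-- Coefficient sum away from the identity. -/
def psi : GrpRing G →ₗ[ℤ] ℤ :=
  (Finsupp.lsum ℤ (fun g : G => if g = 1 then 0 else LinearMap.id)).comp
    (MonoidAlgebra.coeffLinearEquiv ℤ).toLinearMap

open scoped Classical in
lemma psi_single (g : G) (c : ℤ) :
    psi G (MonoidAlgebra.single g c) = if g = 1 then 0 else c := by
  show Finsupp.lsum ℤ _ (Finsupp.single g c) = _
  rw [Finsupp.lsum_single]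
  split <;> simp

lemma psi_one : psi G 1 = 0 := by
  rw [MonoidAlgebra.one_def]; simp [psi_single]

lemma psi_conj (g : G) (x : GrpRing G) : psi G (conjZ G g x) = psi G x := by
  induction x using MonoidAlgebra.induction_linear with
  | zero => simp
  | add a b ha hb => simp [map_add, ha, hb]
  | single h c =>
    have : conjZ G g (MonoidAlgebra.single h c)
        = MonoidAlgebra.single (g * h * g⁻¹) c := by
      simp [conjZ]
    rw [this, psi_single, psi_single]
    congr 1
    simp [eq_iff_iff, mul_inv_eq_one, conj_eq_one_iff]

variable (A : Type) [AddCommGroup A] [Module (GrpRing G) A]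
variable (B : Type) [AddCommGroup B]

/-- The map `A[G] → B`, `a ⊗ x ↦ ψ(x) • φ(a)`. -/
def Fmap (φ : A →+ B) : AG G A →ₗ[ℤ] B :=
  TensorProduct.lift (LinearMap.mk₂ ℤ (fun a x => psi G x • φ a)
    (fun a a' x => by rw [map_add, smul_add])
    (fun c a x => by rw [map_zsmul, smul_comm])
    (fun a x x' => by rw [map_add, add_smul])
    (fun c a x => by rw [map_smul, smul_assoc]))

lemma Fmap_tmul (φ : A →+ B) (a : A) (x : GrpRing G) :
    Fmap G A B φ (a ⊗ₜ[ℤ] x) = psi G x • φ a := rfl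

lemma Fmap_A1 (φ : A →+ B) : ∀ y ∈ A1 G A, Fmap G A B φ y = 0 := by
  rintro _ ⟨a, rfl⟩
  show Fmap G A B φ (a ⊗ₜ[ℤ] 1) = 0
  rw [Fmap_tmul, psi_one, zero_smul]

/-- The map `A[G]/A[1] → B` induced by `Fmap`. -/
def F1 (φ : A →+ B) : AGmod1 G A →+ B :=
  QuotientAddGroup.lift (A1 G A) (Fmap G A B φ).toAddMonoidHom (Fmap_A1 G A B φ)

lemma Fmap_diag (φ : A →+ B) (hφ : ∀ (g : G) (a : A), φ (ofg G g • a) = φ a)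
    (g : G) (t : AG G A) : Fmap G A B φ (diag G A g t) = Fmap G A B φ t := by
  induction t using TensorProduct.induction_on with
  | zero => simp
  | add x y hx hy => rw [map_add, map_add, hx, hy, map_add]
  | tmul a x =>
    show Fmap G A B φ ((TensorProduct.congr (actA G A g) (conjZ G g)) (a ⊗ₜ[ℤ] x)) = _
    rw [TensorProduct.congr_tmul, Fmap_tmul, Fmap_tmul, psi_conj]
    have : actA G A g a = ofg G g • a := rfl
    rw [this, hφ]

lemma F1_diagQ (φ : A →+ B) (hφ : ∀ (g : G) (a : A), φ (ofg G g • a) = φ a)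
    (g : G) (y : AGmod1 G A) : F1 G A B φ (diagQ G A g y) = F1 G A B φ y := by
  induction y using QuotientAddGroup.induction_on with
  | H t =>
    have h1 : diagQ G A g (QuotientAddGroup.mk t) = QuotientAddGroup.mk (diag G A g t) := rfl
    rw [h1]
    show Fmap G A B φ (diag G A g t) = Fmap G A B φ t
    exact Fmap_diag G A B φ hφ g t

/-- The map `Wh₁⁺(G;A) → B` induced by `Fmap`. -/
def Wmap (φ : A →+ B) (hφ : ∀ (g : G) (a : A), φ (ofg G g • a) = φ a) : Wh G A →+ B :=
  QuotientAddGroup.lift (coinvSub G (diagQ G A)) (F1 G A B φ) (by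
    intro x hx
    simp only [AddMonoidHom.mem_ker] at *
    refine AddSubgroup.closure_induction ?_ (map_zero _) ?_ ?_ hx
    · rintro _ ⟨g, n, rfl⟩
      rw [map_sub, F1_diagQ G A B φ hφ, sub_self]
    · intro a b _ _ ha hb; rw [map_add, ha, hb, add_zero]
    · intro a _ ha; rw [map_neg, ha, neg_zero])

/- Now the analogous construction for `B` with trivial action. -/

def FmapT : AGT G B →ₗ[ℤ] B :=
  TensorProduct.lift (LinearMap.mk₂ ℤ (fun b x => psi G x • b)
    (fun b b' x => by rw [smul_add])
    (fun c b x => by rw [smul_comm])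
    (fun b x x' => by rw [map_add, add_smul])
    (fun c b x => by rw [map_smul, smul_assoc]))

lemma FmapT_tmul (b : B) (x : GrpRing G) :
    FmapT G B (b ⊗ₜ[ℤ] x) = psi G x • b := rfl

lemma FmapT_B1 : ∀ y ∈ B1 G B, FmapT G B y = 0 := by
  rintro _ ⟨b, rfl⟩
  show FmapT G B (b ⊗ₜ[ℤ] 1) = 0
  rw [FmapT_tmul, psi_one, zero_smul]

def F1T : BGmod1 G B →+ B :=
  QuotientAddGroup.lift (B1 G B) (FmapT G B).toAddMonoidHom (FmapT_B1 G B)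

lemma FmapT_diag (g : G) (t : AGT G B) : FmapT G B (diagT G B g t) = FmapT G B t := by
  induction t using TensorProduct.induction_on with
  | zero => simp
  | add x y hx hy => rw [map_add, map_add, hx, hy, map_add]
  | tmul b x =>
    show FmapT G B ((TensorProduct.congr (LinearEquiv.refl ℤ B) (conjZ G g)) (b ⊗ₜ[ℤ] x)) = _
    rw [TensorProduct.congr_tmul, FmapT_tmul, FmapT_tmul, psi_conj]
    rfl

lemma F1T_diagQ (g : G) (y : BGmod1 G B) : F1T G B (diagQT G B g y) = F1T G B y := by
  induction y using QuotientAddGroup.induction_on with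
  | H t =>
    have h1 : diagQT G B g (QuotientAddGroup.mk t) = QuotientAddGroup.mk (diagT G B g t) := rfl
    rw [h1]
    exact FmapT_diag G B g t

def WmapT : WhT G B →+ B :=
  QuotientAddGroup.lift (coinvSub G (diagQT G B)) (F1T G B) (by
    intro x hx
    simp only [AddMonoidHom.mem_ker] at *
    refine AddSubgroup.closure_induction ?_ (map_zero _) ?_ ?_ hx
    · rintro _ ⟨g, n, rfl⟩
      rw [map_sub, F1T_diagQ G B, sub_self]
    · intro a b _ _ ha hb; rw [map_add, ha, hb, add_zero]
    · intro a _ ha; rw [map_neg, ha, neg_zero])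

end AuxProof

/-- Let `G` be a group, `A` a left `ℤ[G]`-module, `α ∈ A`, and `σ ∈ G` with
`σ ≠ 1`. If there is a `ℤ[G]`-module homomorphism `φ : A → B` to an abelian group `B` with
trivial `G`-action (i.e. an additive map with `φ(g·a) = φ(a)`) such that `φ(α) ≠ 0`, then
`α[σ]` is nonzero in `Wh₁⁺(G;A)`, and its image `φ(α)[σ]` is nonzero in `Wh₁⁺(G;B)`. -/
theorem stmt_4 (G : Type) [Group G] (A : Type) [AddCommGroup A] [Module (GrpRing G) A]
    (B : Type) [AddCommGroup B] (φ : A →+ B)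
    (hφ : ∀ (g : G) (a : A), φ (ofg G g • a) = φ a)
    (α : A) (σ : G) (hσ : σ ≠ 1) (hα : φ α ≠ 0) :
    whElem G A α σ ≠ 0 ∧ whElemT G B (φ α) σ ≠ 0 := by
  have hψ : psi G (ofg G σ) = 1 := by
    rw [ofg, psi_single]; simp [hσ]
  have key1 : Wmap G A B φ hφ (whElem G A α σ) = φ α := by
    show Fmap G A B φ (α ⊗ₜ[ℤ] ofg G σ) = φ α
    rw [Fmap_tmul, hψ, one_smul]
  have key2 : WmapT G B (whElemT G B (φ α) σ) = φ α := by
    show FmapT G B ((φ α) ⊗ₜ[ℤ] ofg G σ) = φ α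
    rw [FmapT_tmul, hψ, one_smul]
  exact ⟨fun h => hα (by rw [← key1, h, map_zero]),
    fun h => hα (by rw [← key2, h, map_zero])⟩
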